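/- For every natural number n ≥ 2, ∏_{i=1}^{n−1} sin(iπ/n) = n / 2^(n−1). -/

import Mathlib

open Real

lemma abs_one_sub_exp (θ : ℝ) (h0 : 0 ≤ θ) (h2 : θ ≤ 2 * Real.pi) :
    ‖1 - Complex.exp (θ * Complex.I)‖ = 2 * Real.sin (θ / 2) := by
  rw [Complex.norm_def, Complex.normSq_apply, Complex.sub_re, Complex.sub_im,
    Complex.one_re, Complex.one_im, Complex.exp_ofReal_mul_I_re, Complex.exp_ofReal_mul_I_im]
  have hsin : Real.sin (θ / 2) ≥ 0 :=
    Real.sin_nonneg_of_nonneg_of_le_pi (by linarith) (by linarith)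
  have hs : Real.sin (θ / 2) ^ 2 = (1 - Real.cos θ) / 2 := by
    have h1 : Real.cos θ = 2 * Real.cos (θ / 2) ^ 2 - 1 := by
      rw [← Real.cos_two_mul]; ring_nf
    have := Real.sin_sq_add_cos_sq (θ / 2)
    linarith
  have key : (1 - Real.cos θ) * (1 - Real.cos θ) + (0 - Real.sin θ) * (0 - Real.sin θ)
      = (2 * Real.sin (θ / 2)) ^ 2 := by
    have := Real.sin_sq_add_cos_sq θ
    nlinarith
  rw [key, Real.sqrt_sq (by positivity)]

theorem prod_sin_fractions (n : ℕ) (hn : 2 ≤ n) :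
    (∏ i ∈ Finset.Icc 1 (n - 1), Real.sin ((i : ℝ) * Real.pi / n)) =
      (n : ℝ) / 2 ^ (n - 1) := by
  obtain ⟨m, rfl⟩ : ∃ m, n = m + 1 := ⟨n - 1, by omega⟩
  have hm : 1 ≤ m := by omega
  set μ : ℂ := Complex.exp (2 * Real.pi * Complex.I / (m + 1)) with hμdef
  have hμ : IsPrimitiveRoot μ (m + 1) := by
    have h := Complex.isPrimitiveRoot_exp (m + 1) (by omega)
    rwa [show ((m + 1 : ℕ) : ℂ) = (m : ℂ) + 1 by push_cast; ring] at h
  have habs := congrArg (‖·‖) hμ.prod_one_sub_pow_eq_order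
  rw [norm_prod] at habs
  have hterm : ∀ k ∈ Finset.range m,
      ‖1 - μ ^ (k + 1)‖ = 2 * Real.sin (((k : ℝ) + 1) * Real.pi / (m + 1)) := by
    intro k hk
    rw [Finset.mem_range] at hk
    rw [hμdef, ← Complex.exp_nat_mul]
    have harg : ((k : ℂ) + 1) * (2 * Real.pi * Complex.I / ((m : ℂ) + 1)) =
        ((2 * Real.pi * ((k : ℝ) + 1) / ((m : ℝ) + 1) : ℝ) : ℂ) * Complex.I := by
      push_cast
      have hne : ((m : ℂ) + 1) ≠ 0 := Nat.cast_add_one_ne_zero m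
      field_simp
    have hk1 : ((k : ℝ) + 1) ≤ (m : ℝ) := by exact_mod_cast hk
    have hmp : (0 : ℝ) < (m : ℝ) + 1 := by positivity
    push_cast
    rw [harg, abs_one_sub_exp]
    · congr 1
      ring
    · positivity
    · rw [div_le_iff₀ hmp]
      nlinarith [Real.pi_pos]
  rw [Finset.prod_congr rfl hterm, Finset.prod_mul_distrib, Finset.prod_const,
    Finset.card_range] at habs
  have hcast : ‖((m : ℂ) + 1)‖ = (m : ℝ) + 1 := by
    rw [show ((m : ℂ) + 1) = (((m : ℝ) + 1 : ℝ) : ℂ) by push_cast; ring, Complex.norm_real, Real.norm_eq_abs,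
      abs_of_pos (by positivity)]
  rw [hcast] at habs
  have hIcc : (∏ i ∈ Finset.Icc 1 m, Real.sin ((i : ℝ) * Real.pi / ((m : ℝ) + 1)))
      = ∏ x ∈ Finset.range m, Real.sin (((x : ℝ) + 1) * Real.pi / ((m : ℝ) + 1)) := by
    rw [← Finset.Ico_add_one_right_eq_Icc, Finset.prod_Ico_eq_prod_range]
    refine Finset.prod_congr (by norm_num) fun k _ => by push_cast; ring_nf
  simp only [Nat.add_sub_cancel]
  push_cast
  rw [eq_div_iff (by positivity), hIcc, mul_comm]
  exact habs
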